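/- arXiv:1207.3462 — 2 statements merged into one kernel-verified Lean document; each statement's English description precedes it below -/
import Mathlib

section
/- Every finite nonempty semiorder contains a bad element, i.e., an element x such that (i) x is on the first level or x is smaller than every element on the level immediately above its level, and (ii) x is on the last level or x is not larger than any element on the level immediately below its level. -/
namespace Paper

/-- Two elements are incomparable. -/
def Incomp {α : Type*} [PartialOrder α] (a b : α) : Prop := ¬ a ≤ b ∧ ¬ b ≤ a

/-- A semiorder: no induced `2+2` and no induced `3+1`. -/
def IsSemiorder (α : Type*) [PartialOrder α] : Prop :=
  (¬ ∃ x y z w : α, y < x ∧ w < z ∧ Incomp x z ∧ Incomp x w ∧ Incomp y z ∧ Incomp y w) ∧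
  (¬ ∃ x y z w : α, z < y ∧ y < x ∧ Incomp x w ∧ Incomp y w ∧ Incomp z w)

/-- There is a chain of `k` elements. -/
def HasChain (α : Type*) [Preorder α] (k : ℕ) : Prop := ∃ c : Fin k → α, StrictMono c

/-- The length of a longest chain (number of edges) is exactly `H`. -/
def HasLength (α : Type*) [Preorder α] (H : ℕ) : Prop :=
  HasChain α (H + 1) ∧ ¬ HasChain α (H + 2)

/-- There is a chain of `k` elements all strictly above `a`. -/
def HasChainAbove {α : Type*} [Preorder α] (a : α) (k : ℕ) : Prop :=
  ∃ c : Fin k → α, StrictMono c ∧ ∀ j, a < c j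

/-- `a` is on the `i`-th level (`i ≥ 1`). -/
def OnLevel {α : Type*} [Preorder α] (a : α) (i : ℕ) : Prop :=
  1 ≤ i ∧ HasChainAbove a (i - 1) ∧ ¬ HasChainAbove a i

/-- Number of isomorphism classes of partial orders on `Fin n` satisfying `pred`. -/
noncomputable def countPosets (n : ℕ) (pred : PartialOrder (Fin n) → Prop) : ℕ :=
  Nat.card (Quot (fun (P Q : {P : PartialOrder (Fin n) // pred P}) =>
    ∃ e : Fin n ≃ Fin n, ∀ a b : Fin n,
      (@LE.le _ P.1.toPreorder.toLE a b ↔ @LE.le _ Q.1.toPreorder.toLE (e a) (e b))))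

/-- Semiorder of length exactly `H`. -/
def SemiLen (n H : ℕ) (P : PartialOrder (Fin n)) : Prop :=
  @IsSemiorder (Fin n) P ∧ @HasLength (Fin n) P.toPreorder H

/-- Semiorder of length at most `h`. -/
def SemiLenLe (n h : ℕ) (P : PartialOrder (Fin n)) : Prop :=
  @IsSemiorder (Fin n) P ∧ ¬ @HasChain (Fin n) P.toPreorder (h + 2)

/-- `f_H^n`. -/
noncomputable def fEx (H n : ℕ) : ℕ := countPosets n (SemiLen n H)

/-- `f_{≤h}^n`. -/
noncomputable def fLe (h n : ℕ) : ℕ := countPosets n (SemiLenLe n h)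

/-- Ordered (plane) trees. -/
inductive PTree where
  | node : List PTree → PTree

def PTree.size : PTree → ℕ
  | .node cs => 1 + (cs.attach.map fun c => PTree.size c.1).sum
decreasing_by have := List.sizeOf_lt_of_mem c.2; simp only [PTree.node.sizeOf_spec] at *; omega

def PTree.height : PTree → ℕ
  | .node cs => (cs.attach.map fun c => PTree.height c.1 + 1).foldr max 0
decreasing_by have := List.sizeOf_lt_of_mem c.2; simp only [PTree.node.sizeOf_spec] at *; omega

def PTree.countDepth : PTree → ℕ → ℕ
  | .node _, 0 => 1
  | .node cs, d + 1 => (cs.attach.map fun c => PTree.countDepth c.1 d).sum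
termination_by t _ => sizeOf t
decreasing_by have := List.sizeOf_lt_of_mem c.2; simp only [PTree.node.sizeOf_spec] at *; omega

/-- Value of a path after the steps in `l` (`true` = up-step, `false` = down-step). -/
def pathVal (l : List Bool) : ℤ := (l.map fun b => if b then (1 : ℤ) else -1).sum

/-- `l` is a Dyck path. -/
def IsDyckPath (l : List Bool) : Prop :=
  pathVal l = 0 ∧ ∀ p, p <+: l → 0 ≤ pathVal p

/-- The height of the path `l` is exactly `H`. -/
def DyckHeightIs (l : List Bool) (H : ℕ) : Prop :=
  (∃ p, p <+: l ∧ pathVal p = H) ∧ ∀ p, p <+: l → pathVal p ≤ (H : ℤ)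

/-- Number of peaks of a path. -/
def peaks (l : List Bool) : ℕ :=
  ((List.range l.length).filter fun i => l.getD i false && !(l.getD (i + 1) true)).length


section Aux
variable {α : Type*} [PartialOrder α]

lemma hasChainAbove_zero (a : α) : HasChainAbove a 0 :=
  ⟨Fin.elim0, fun i => i.elim0, fun j => j.elim0⟩

lemma hasChainAbove_mono {a : α} {k k' : ℕ} (h : k' ≤ k) (hc : HasChainAbove a k) :
    HasChainAbove a k' := by
  obtain ⟨c, hmono, habove⟩ := hc
  refine ⟨fun i => c (Fin.castLE h i), fun i j hij => hmono ?_, fun j => habove _⟩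
  rw [Fin.lt_def] at hij ⊢
  simpa using hij

lemma hasChainAbove_cons {a b : α} {k : ℕ} (hab : a < b) (hc : HasChainAbove b k) :
    HasChainAbove a (k + 1) := by
  obtain ⟨c, hmono, habove⟩ := hc
  refine ⟨fun j => if h : j.val = 0 then b else c ⟨j.val - 1, by have := j.2; omega⟩, ?_, ?_⟩
  · intro i j hij
    rw [Fin.lt_def] at hij
    have hj : j.val ≠ 0 := by omega
    by_cases hi : i.val = 0
    · simp only [dif_pos hi, dif_neg hj]
      exact habove _
    · simp only [dif_neg hi, dif_neg hj]
      exact hmono (Fin.mk_lt_mk.mpr (by omega))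
  · intro j
    by_cases hj : j.val = 0
    · simp only [dif_pos hj]; exact hab
    · simp only [dif_neg hj]; exact hab.trans (habove _)

lemma hasChain_of_above {a : α} {k : ℕ} (hc : HasChainAbove a k) : HasChain α (k + 1) := by
  obtain ⟨c, hmono, habove⟩ := hc
  refine ⟨fun j => if h : j.val = 0 then a else c ⟨j.val - 1, by have := j.2; omega⟩, ?_⟩
  intro i j hij
  rw [Fin.lt_def] at hij
  have hj : j.val ≠ 0 := by omega
  by_cases hi : i.val = 0
  · simp only [dif_pos hi, dif_neg hj]
    exact habove _
  · simp only [dif_neg hi, dif_neg hj]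
    exact hmono (Fin.mk_lt_mk.mpr (by omega))

lemma hasChain_card [Fintype α] {k : ℕ} (h : HasChain α k) : k ≤ Fintype.card α := by
  obtain ⟨c, hc⟩ := h
  simpa using Fintype.card_le_of_injective c hc.injective

lemma hasChain_one [Nonempty α] : HasChain α 1 :=
  ⟨fun _ => Classical.arbitrary α, fun i j hij => by
    have := i.2; have := j.2; rw [Fin.lt_def] at hij; omega⟩

lemma exists_hasLength [Fintype α] [Nonempty α] : ∃ H, HasLength α H := by
  classical
  set G := Nat.findGreatest (fun k => HasChain α (k + 1)) (Fintype.card α) with hG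
  refine ⟨G, ?_, ?_⟩
  · exact Nat.findGreatest_spec (P := fun k => HasChain α (k + 1)) (Nat.zero_le _) hasChain_one
  · intro hch
    have h1 := hasChain_card hch
    have h2 := Nat.le_findGreatest (P := fun k => HasChain α (k + 1)) (m := G + 1)
      (n := Fintype.card α) (by omega) hch
    omega

lemma exists_onLevel [Fintype α] (a : α) : ∃ i, OnLevel a i := by
  classical
  set G := Nat.findGreatest (HasChainAbove a) (Fintype.card α) with hG
  refine ⟨G + 1, by omega, ?_, ?_⟩
  · simpa using Nat.findGreatest_spec (P := HasChainAbove a) (Nat.zero_le _)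
      (hasChainAbove_zero a)
  · intro hch
    have h1 := hasChain_card (hasChain_of_above hch)
    have h2 := Nat.le_findGreatest (P := HasChainAbove a) (m := G + 1)
      (n := Fintype.card α) (by omega) hch
    omega

lemma onLevel_unique {a : α} {i j : ℕ} (hi : OnLevel a i) (hj : OnLevel a j) : j = i := by
  by_contra h
  rcases Nat.lt_or_ge i j with h' | h'
  · exact hi.2.2 (hasChainAbove_mono (by omega) hj.2.1)
  · exact hj.2.2 (hasChainAbove_mono (by omega) hi.2.1)

/-- the trace preorder -/
def Tle (a b : α) : Prop := (∀ c, b < c → a < c) ∧ (∀ c, c < a → c < b)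

lemma tle_refl (a : α) : Tle a a := ⟨fun _ h => h, fun _ h => h⟩

lemma tle_trans {a b c : α} (h1 : Tle a b) (h2 : Tle b c) : Tle a c :=
  ⟨fun d hd => h1.1 d (h2.1 d hd), fun d hd => h2.2 d (h1.2 d hd)⟩

lemma tle_total (hsemi : IsSemiorder α) (a b : α) : Tle a b ∨ Tle b a := by
  by_contra hcon
  push_neg at hcon
  obtain ⟨hab, hba⟩ := hcon
  have hab' : (∃ c, b < c ∧ ¬ a < c) ∨ (∃ c, c < a ∧ ¬ c < b) := by
    rw [Tle, not_and_or] at hab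
    rcases hab with h | h
    · left; push_neg at h; exact h
    · right; push_neg at h; exact h
  have hba' : (∃ d, a < d ∧ ¬ b < d) ∨ (∃ d, d < b ∧ ¬ d < a) := by
    rw [Tle, not_and_or] at hba
    rcases hba with h | h
    · left; push_neg at h; exact h
    · right; push_neg at h; exact h
  obtain ⟨O1, O2⟩ := hsemi
  rcases hab' with ⟨c, hbc, hac⟩ | ⟨c, hca, hcb⟩ <;>
    rcases hba' with ⟨d, had, hbd⟩ | ⟨d, hdb, hda⟩
  · -- b < c, ¬ a < c, a < d, ¬ b < d : 2+2 with chains a<d and b<c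
    refine O1 ⟨d, a, c, b, had, hbc, ?_, ?_, ?_, ?_⟩
    · exact ⟨fun h => hac (had.trans_le h), fun h => hbd (hbc.trans_le h)⟩
    · constructor
      · intro h; exact hac ((had.trans_le h).trans hbc)
      · intro h
        rcases lt_or_eq_of_le h with h' | h'
        · exact hbd h'
        · rw [← h'] at had; exact hac (had.trans hbc)
    · constructor
      · intro h
        rcases lt_or_eq_of_le h with h' | h'
        · exact hac h'
        · rw [← h'] at hbc; exact hbd (hbc.trans had)
      · intro h; exact hbd ((hbc.trans_le h).trans had)
    · exact ⟨fun h => hac (h.trans_lt hbc), fun h => hbd (h.trans_lt had)⟩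
  · -- b < c, ¬ a < c, d < b, ¬ d < a : 3+1 chain d < b < c, isolated a
    refine O2 ⟨c, b, d, a, hdb, hbc, ?_, ?_, ?_⟩
    · constructor
      · intro h; exact hda ((hdb.trans hbc).trans_le h)
      · intro h
        rcases lt_or_eq_of_le h with h' | h'
        · exact hac h'
        · rw [← h'] at hbc; exact hda (hdb.trans hbc)
    · exact ⟨fun h => hda (hdb.trans_le h), fun h => hac (h.trans_lt hbc)⟩
    · constructor
      · intro h
        rcases lt_or_eq_of_le h with h' | h'
        · exact hda h'
        · rw [h'] at hdb; exact hac (hdb.trans hbc)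
      · intro h; exact hac ((h.trans_lt hdb).trans hbc)
  · -- c < a, ¬ c < b, a < d, ¬ b < d : 3+1 chain c < a < d, isolated b
    refine O2 ⟨d, a, c, b, hca, had, ?_, ?_, ?_⟩
    · constructor
      · intro h; exact hcb ((hca.trans had).trans_le h)
      · intro h
        rcases lt_or_eq_of_le h with h' | h'
        · exact hbd h'
        · rw [← h'] at had; exact hcb (hca.trans had)
    · exact ⟨fun h => hcb (hca.trans_le h), fun h => hbd (h.trans_lt had)⟩
    · constructor
      · intro h
        rcases lt_or_eq_of_le h with h' | h'
        · exact hcb h'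
        · rw [h'] at hca; exact hbd (hca.trans had)
      · intro h; exact hbd ((h.trans_lt hca).trans had)
  · -- c < a, ¬ c < b, d < b, ¬ d < a : 2+2 with chains c<a and d<b
    refine O1 ⟨a, c, b, d, hca, hdb, ?_, ?_, ?_, ?_⟩
    · exact ⟨fun h => hcb (hca.trans_le h), fun h => hda (hdb.trans_le h)⟩
    · constructor
      · intro h; exact hcb ((hca.trans_le h).trans hdb)
      · intro h
        rcases lt_or_eq_of_le h with h' | h'
        · exact hda h'
        · rw [← h'] at hca; exact hcb (hca.trans hdb)
    · constructor
      · intro h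
        rcases lt_or_eq_of_le h with h' | h'
        · exact hcb h'
        · rw [← h'] at hdb; exact hda (hdb.trans hca)
      · intro h; exact hda ((hdb.trans_le h).trans hca)
    · exact ⟨fun h => hcb (h.trans_lt hdb), fun h => hda (h.trans_lt hca)⟩

lemma exists_tle_min (hsemi : IsSemiorder α) (s : Finset α) (hs : s.Nonempty) :
    ∃ x ∈ s, ∀ y ∈ s, Tle x y := by
  classical
  revert hs
  induction s using Finset.induction_on with
  | empty => intro hs; exact absurd hs (by simp)
  | @insert a s ha ih =>
    intro hs
    rcases s.eq_empty_or_nonempty with rfl | hs'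
    · refine ⟨a, by simp, fun y hy => ?_⟩
      rw [Finset.mem_insert] at hy
      rcases hy with rfl | hy
      · exact tle_refl _
      · simp at hy
    · obtain ⟨x, hxs, hx⟩ := ih hs'
      rcases tle_total hsemi x a with h | h
      · refine ⟨x, Finset.mem_insert_of_mem hxs, fun y hy => ?_⟩
        rcases Finset.mem_insert.mp hy with rfl | hy
        · exact h
        · exact hx y hy
      · refine ⟨a, Finset.mem_insert_self a s, fun y hy => ?_⟩
        rcases Finset.mem_insert.mp hy with rfl | hy
        · exact tle_refl _
        · exact tle_trans h (hx y hy)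

lemma chain_down {H : ℕ} {c : Fin (H + 1) → α} (hc : StrictMono c) :
    ∀ j (hj : j ≤ H) k, HasChainAbove (c ⟨j, by omega⟩) k → HasChainAbove (c 0) (k + j) := by
  intro j
  induction j with
  | zero =>
    intro hj k hk
    have he : (⟨0, by omega⟩ : Fin (H + 1)) = 0 := by ext; simp
    rw [he] at hk
    simpa using hk
  | succ j ih =>
    intro hj k hk
    have hlt : c ⟨j, by omega⟩ < c ⟨j + 1, by omega⟩ := hc (Fin.mk_lt_mk.mpr (by omega))
    have := ih (by omega) (k + 1) (hasChainAbove_cons hlt hk)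
    have he : k + 1 + j = k + (j + 1) := by omega
    rwa [he] at this

lemma level_nonempty [Fintype α] {H : ℕ} (hH : HasLength α H) {i : ℕ} (h1 : 1 ≤ i)
    (h2 : i ≤ H + 1) : ∃ a : α, OnLevel a i := by
  obtain ⟨c, hc⟩ := hH.1
  refine ⟨c ⟨H + 1 - i, by omega⟩, h1, ?_, ?_⟩
  · refine ⟨fun t => c ⟨H + 2 - i + t.val, by have := t.2; omega⟩, ?_, ?_⟩
    · intro s t hst
      rw [Fin.lt_def] at hst
      apply hc
      rw [Fin.mk_lt_mk]
      omega
    · intro t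
      apply hc
      rw [Fin.mk_lt_mk]
      have := t.2; omega
  · intro hch
    have := chain_down hc (H + 1 - i) (by omega) i hch
    have he : i + (H + 1 - i) = H + 1 := by omega
    rw [he] at this
    exact hH.2 (hasChain_of_above this)

end Aux

/-- A bad element of a semiorder. -/
def IsBad {α : Type*} [PartialOrder α] (x : α) : Prop :=
  ∀ i, OnLevel x i →
    ((i = 1 ∨ ∀ b, OnLevel b (i - 1) → x < b) ∧
     ((∃ H, HasLength α H ∧ i = H + 1) ∨ ∀ b, OnLevel b (i + 1) → ¬ b < x))

theorem statement8 {α : Type*} [Fintype α] [PartialOrder α] [Nonempty α]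
    (hsemi : IsSemiorder α) : ∃ x : α, IsBad x := by
  classical
  obtain ⟨H, hH⟩ := exists_hasLength (α := α)
  have getmin : ∀ i, 1 ≤ i → i ≤ H + 1 →
      ∃ x : α, OnLevel x i ∧ ∀ y, OnLevel y i → Tle x y := by
    intro i h1 h2
    obtain ⟨x', hx'⟩ := level_nonempty hH h1 h2
    obtain ⟨y, hy, hymin⟩ := exists_tle_min hsemi (Finset.univ.filter (fun z => OnLevel z i))
      ⟨x', by simp [hx']⟩
    rw [Finset.mem_filter] at hy
    exact ⟨y, hy.2, fun z hz => hymin z (by simp [hz])⟩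
  have key : ∀ n i, i + n = H + 1 → 1 ≤ i → ∀ x : α, OnLevel x i →
      (∀ y, OnLevel y i → Tle x y) →
      (i = 1 ∨ ∀ b, OnLevel b (i - 1) → x < b) → ∃ z : α, IsBad z := by
    intro n
    induction n with
    | zero =>
      intro i hi h1 x hx hxmin hS
      refine ⟨x, fun j hj => ?_⟩
      rw [onLevel_unique hx hj]
      exact ⟨hS, Or.inl ⟨H, hH, by omega⟩⟩
    | succ n ih =>
      intro i hi h1 x hx hxmin hS
      by_cases hQ : ∀ b, OnLevel b (i + 1) → ¬ b < x
      · refine ⟨x, fun j hj => ?_⟩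
        rw [onLevel_unique hx hj]
        exact ⟨hS, Or.inr hQ⟩
      · push_neg at hQ
        obtain ⟨cc, hcc, hccx⟩ := hQ
        obtain ⟨y, hyl, hymin⟩ := getmin (i + 1) (by omega) (by omega)
        have hyx : y < x := (hymin cc hcc).1 x hccx
        have hSnext : ∀ b, OnLevel b i → y < b := fun b hb => (hxmin b hb).2 y hyx
        exact ih (i + 1) (by omega) (by omega) y hyl hymin (Or.inr hSnext)
  obtain ⟨x, hx, hxmin⟩ := getmin 1 le_rfl (by omega)
  exact key H 1 (by omega) le_rfl x hx hxmin (Or.inl rfl)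

end Paper
end

section
/- The number of nonisomorphic labeled n-element semiorders of length at most one equals the number of ordered set partitions of {1,...,n} (the Fubini/ordered Bell number). -/
namespace Paper

section Lists
variable {n : ℕ}

/-- Validity of a list of blocks: the ordered set partition conditions. -/
def Valid (n : ℕ) (L : List (Finset (Fin n))) : Prop :=
  (∀ s ∈ L, s.Nonempty) ∧ L.Pairwise (fun s t => Disjoint s t) ∧
    L.foldr (· ∪ ·) ∅ = Finset.univ

/-- The strict order encoded by a list of blocks. -/
def ltL (L : List (Finset (Fin n))) (a b : Fin n) : Prop :=
  ∃ p q : ℕ, q < p ∧ p < L.length ∧ p % 2 ≠ L.length % 2 ∧ q % 2 = L.length % 2 ∧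
    a ∈ L.getD p ∅ ∧ b ∈ L.getD q ∅

lemma mem_foldr_union {L : List (Finset (Fin n))} {x : Fin n} :
    x ∈ L.foldr (· ∪ ·) ∅ ↔ ∃ s ∈ L, x ∈ s := by
  induction L with
  | nil => simp
  | cons a t ih => simp [Finset.mem_union, ih]

lemma Valid.disjoint {L : List (Finset (Fin n))} (h : Valid n L) {p q : ℕ}
    (hpq : p ≠ q) (hp : p < L.length) (hq : q < L.length) :
    Disjoint (L.getD p ∅) (L.getD q ∅) := by
  rw [List.getD_eq_getElem L ∅ hp, List.getD_eq_getElem L ∅ hq]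
  rcases lt_or_gt_of_ne hpq with h' | h'
  · exact List.pairwise_iff_getElem.1 h.2.1 p q hp hq h'
  · exact (List.pairwise_iff_getElem.1 h.2.1 q p hq hp h').symm

lemma Valid.idx_unique {L : List (Finset (Fin n))} (h : Valid n L) {a : Fin n} {p q : ℕ}
    (hp : p < L.length) (hq : q < L.length)
    (h1 : a ∈ L.getD p ∅) (h2 : a ∈ L.getD q ∅) : p = q := by
  by_contra hne
  exact (h.disjoint hne hp hq).forall_ne_finset h1 h2 rfl

lemma Valid.exists_idx {L : List (Finset (Fin n))} (h : Valid n L) (a : Fin n) :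
    ∃ p, p < L.length ∧ a ∈ L.getD p ∅ := by
  have : a ∈ L.foldr (· ∪ ·) ∅ := by rw [h.2.2]; exact Finset.mem_univ a
  obtain ⟨s, hs, has⟩ := mem_foldr_union.1 this
  obtain ⟨p, hp, rfl⟩ := List.mem_iff_getElem.1 hs
  exact ⟨p, hp, by rwa [List.getD_eq_getElem L ∅ hp]⟩

lemma ltL_irrefl {L : List (Finset (Fin n))} (h : Valid n L) (a : Fin n) : ¬ ltL L a a := by
  rintro ⟨p, q, hqp, hp, hpar, hqpar, ha1, ha2⟩
  exact absurd (h.idx_unique hp (hqp.trans hp) ha1 ha2) (by omega)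

lemma ltL_comp {L : List (Finset (Fin n))} (h : Valid n L) {a b c : Fin n} :
    ltL L a b → ltL L b c → False := by
  rintro ⟨p, q, hqp, hp, hpar, hqpar, ha, hb1⟩ ⟨p', q', hqp', hp', hpar', hqpar', hb2, hc⟩
  have := h.idx_unique (hqp.trans hp) hp' hb1 hb2
  omega

lemma ltL_asymm {L : List (Finset (Fin n))} (h : Valid n L) {a b : Fin n} :
    ltL L a b → ltL L b a → False := fun h1 h2 => ltL_comp h h1 h2

lemma ltL_ne {L : List (Finset (Fin n))} (h : Valid n L) {a b : Fin n} :
    ltL L a b → a ≠ b := fun h1 h2 => ltL_irrefl h a (h2 ▸ h1)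

/-- The partial order encoded by a valid list of blocks. -/
def toPO (L : List (Finset (Fin n))) (hV : Valid n L) : PartialOrder (Fin n) where
  le a b := a = b ∨ ltL L a b
  lt a b := (a = b ∨ ltL L a b) ∧ ¬ (b = a ∨ ltL L b a)
  lt_iff_le_not_ge _ _ := Iff.rfl
  le_refl a := Or.inl rfl
  le_trans a b c hab hbc := by
    rcases hab with rfl | hab
    · exact hbc
    · rcases hbc with rfl | hbc
      · exact Or.inr hab
      · exact (ltL_comp hV hab hbc).elim
  le_antisymm a b hab hba := by
    rcases hab with rfl | hab
    · rfl
    · rcases hba with rfl | hba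
      · rfl
      · exact (ltL_asymm hV hab hba).elim

lemma toPO_le_iff {L : List (Finset (Fin n))} (hV : Valid n L) {a b : Fin n} :
    (@LE.le _ (toPO L hV).toLE a b) ↔ (a = b ∨ ltL L a b) := Iff.rfl

lemma toPO_lt_iff {L : List (Finset (Fin n))} (hV : Valid n L) {a b : Fin n} :
    (@LT.lt _ (toPO L hV).toLT a b) ↔ ltL L a b := by
  constructor
  · rintro ⟨h1, h2⟩
    rcases h1 with rfl | h1
    · exact absurd (Or.inl rfl : a = a ∨ ltL L a a) h2
    · exact h1
  · intro h
    exact ⟨Or.inr h, by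
      rintro (h2 | h')
      · exact ltL_irrefl hV a (by rwa [h2] at h)
      · exact ltL_asymm hV h h'⟩

lemma toPO_semi {L : List (Finset (Fin n))} (hV : Valid n L) :
    SemiLenLe n 1 (toPO L hV) := by
  have hchain : ¬ @HasChain (Fin n) (toPO L hV).toPreorder 3 := by
    rintro ⟨c, hc⟩
    have h01 : ltL L (c 0) (c 1) := (toPO_lt_iff hV).1 (hc (by decide : (0:Fin 3) < 1))
    have h12 : ltL L (c 1) (c 2) := (toPO_lt_iff hV).1 (hc (by decide : (1:Fin 3) < 2))
    exact ltL_comp hV h01 h12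
  refine ⟨⟨?_, ?_⟩, hchain⟩
  · rintro ⟨x, y, z, w, hyx, hwz, hxz, hxw, hyz, hyw⟩
    rw [toPO_lt_iff hV] at hyx hwz
    obtain ⟨py, qx, h1, h2, h3, h4, hmy, hmx⟩ := hyx
    obtain ⟨pw, qz, h1', h2', h3', h4', hmw, hmz⟩ := hwz
    have hyz' : ¬ ltL L y z := fun hl => hyz.1 (Or.inr hl)
    have hwx' : ¬ ltL L w x := fun hl => hxw.2 (Or.inr hl)
    have hA : ¬ qz < py := fun hlt => hyz' ⟨py, qz, hlt, h2, h3, h4', hmy, hmz⟩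
    have hB : ¬ qx < pw := fun hlt => hwx' ⟨pw, qx, hlt, h2', h3', h4, hmw, hmx⟩
    omega
  · rintro ⟨x, y, z, w, hzy, hyx, _, _, _⟩
    rw [toPO_lt_iff hV] at hzy hyx
    exact ltL_comp hV hzy hyx

end Lists

section Master
variable {n : ℕ}

open Classical in
/-- Strict down-set of `x` under relation `r`. -/
noncomputable def Dset (r : Fin n → Fin n → Prop) (x : Fin n) : Finset (Fin n) :=
  Finset.univ.filter fun y => r y x

open Classical in
/-- Strict up-set of `x` under relation `r`. -/
noncomputable def Uset (r : Fin n → Fin n → Prop) (x : Fin n) : Finset (Fin n) :=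
  Finset.univ.filter fun y => r x y

lemma mem_Dset {r : Fin n → Fin n → Prop} {x y : Fin n} : y ∈ Dset r x ↔ r y x := by
  simp [Dset]

lemma mem_Uset {r : Fin n → Fin n → Prop} {x y : Fin n} : y ∈ Uset r x ↔ r x y := by
  simp [Uset]

/-- The distinct nonempty down-sets. -/
noncomputable def DVals (r : Fin n → Fin n → Prop) : Finset (Finset (Fin n)) :=
  (Finset.univ.filter fun x => (Dset r x).Nonempty).image (Dset r)

/-- The isolated elements. -/
noncomputable def Zset (r : Fin n → Fin n → Prop) : Finset (Fin n) :=
  Finset.univ.filter fun x => Dset r x = ∅ ∧ Uset r x = ∅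

noncomputable def kOf (r : Fin n → Fin n → Prop) : ℕ := (DVals r).card

noncomputable def oOf (r : Fin n → Fin n → Prop) : ℕ := if (Zset r).Nonempty then 1 else 0

noncomputable def mOf (r : Fin n → Fin n → Prop) : ℕ := oOf r + 2 * kOf r

/-- corank of a down-set. -/
noncomputable def crkS (r : Fin n → Fin n → Prop) (v : Finset (Fin n)) : ℕ :=
  ((DVals r).filter fun w => v ⊂ w).card

/-- number of down-sets containing `a`. -/
noncomputable def nA (r : Fin n → Fin n → Prop) (a : Fin n) : ℕ :=
  ((DVals r).filter fun w => a ∈ w).card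

/-- the block index of an element. -/
noncomputable def iotaF (r : Fin n → Fin n → Prop) (x : Fin n) : ℕ :=
  if (Dset r x).Nonempty then oOf r + 2 * crkS r (Dset r x)
  else if (Uset r x).Nonempty then oOf r + 2 * nA r x - 1
  else 0

noncomputable def blockAt (r : Fin n → Fin n → Prop) (p : ℕ) : Finset (Fin n) :=
  Finset.univ.filter fun x => iotaF r x = p

/-- the list of blocks recovered from `r`. -/
noncomputable def PsiL (r : Fin n → Fin n → Prop) : List (Finset (Fin n)) :=
  (List.range (mOf r)).map (blockAt r)

lemma mem_blockAt {r : Fin n → Fin n → Prop} {x : Fin n} {p : ℕ} :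
    x ∈ blockAt r p ↔ iotaF r x = p := by simp [blockAt]

lemma mem_DVals {r : Fin n → Fin n → Prop} {v : Finset (Fin n)} :
    v ∈ DVals r ↔ ∃ x, (Dset r x).Nonempty ∧ Dset r x = v := by
  simp [DVals]

lemma oOf_le_one {r : Fin n → Fin n → Prop} : oOf r ≤ 1 := by
  unfold oOf; split <;> omega

lemma oOf_eq_one {r : Fin n → Fin n → Prop} (h : oOf r = 1) : (Zset r).Nonempty := by
  unfold oOf at h; split at h
  · assumption
  · omega

lemma oOf_eq_one_of {r : Fin n → Fin n → Prop} (h : (Zset r).Nonempty) : oOf r = 1 := by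
  unfold oOf; rw [if_pos h]

lemma mOf_mod_two {r : Fin n → Fin n → Prop} : mOf r % 2 = oOf r := by
  have := @oOf_le_one n r; unfold mOf; omega

lemma iotaF_of_D {r : Fin n → Fin n → Prop} {x : Fin n} (h : (Dset r x).Nonempty) :
    iotaF r x = oOf r + 2 * crkS r (Dset r x) := by
  unfold iotaF; rw [if_pos h]

lemma iotaF_of_U {r : Fin n → Fin n → Prop} {x : Fin n} (hD : ¬ (Dset r x).Nonempty)
    (hU : (Uset r x).Nonempty) : iotaF r x = oOf r + 2 * nA r x - 1 := by
  unfold iotaF; rw [if_neg hD, if_pos hU]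

lemma iotaF_of_iso {r : Fin n → Fin n → Prop} {x : Fin n} (hD : ¬ (Dset r x).Nonempty)
    (hU : ¬ (Uset r x).Nonempty) : iotaF r x = 0 := by
  unfold iotaF; rw [if_neg hD, if_neg hU]

variable {r : Fin n → Fin n → Prop}

lemma mem_DVals_of (h : (Dset r x).Nonempty) : Dset r x ∈ DVals r :=
  mem_DVals.2 ⟨x, h, rfl⟩

lemma DVals_nonempty_mem {v : Finset (Fin n)} (h : v ∈ DVals r) : v.Nonempty := by
  obtain ⟨x, hx, rfl⟩ := mem_DVals.1 h; exact hx

lemma nA_le_k (a : Fin n) : nA r a ≤ kOf r := Finset.card_filter_le _ _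

lemma nA_pos {a : Fin n} (h : (Uset r a).Nonempty) : 1 ≤ nA r a := by
  obtain ⟨b, hb⟩ := h
  have hr : r a b := mem_Uset.1 hb
  have h1 : a ∈ Dset r b := mem_Dset.2 hr
  have h2 : Dset r b ∈ DVals r := mem_DVals_of ⟨a, h1⟩
  unfold nA
  exact Finset.card_pos.2 ⟨Dset r b, Finset.mem_filter.2 ⟨h2, h1⟩⟩

lemma crkS_lt_k {v : Finset (Fin n)} (h : v ∈ DVals r) : crkS r v < kOf r := by
  apply Finset.card_lt_card
  constructor
  · exact Finset.filter_subset _ _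
  · intro hsub
    have := Finset.mem_filter.1 (hsub h)
    exact ssubset_irrefl v this.2

section Hyp
variable (Hch : ∀ x y : Fin n, Dset r x ⊆ Dset r y ∨ Dset r y ⊆ Dset r x)
  (H2 : ∀ a b c : Fin n, r a b → r b c → False)

include Hch in
lemma DVals_chain {v w : Finset (Fin n)} (hv : v ∈ DVals r) (hw : w ∈ DVals r) :
    v ⊆ w ∨ w ⊆ v := by
  obtain ⟨x, _, rfl⟩ := mem_DVals.1 hv
  obtain ⟨y, _, rfl⟩ := mem_DVals.1 hw
  exact Hch x y

include H2 in
lemma D_U_not_both {x : Fin n} (hD : (Dset r x).Nonempty) (hU : (Uset r x).Nonempty) :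
    False := by
  obtain ⟨a, ha⟩ := hD
  obtain ⟨b, hb⟩ := hU
  exact H2 a x b (mem_Dset.1 ha) (mem_Uset.1 hb)

include Hch in
lemma chainCount {a b : Fin n} (hb : (Dset r b).Nonempty) :
    a ∈ Dset r b ↔ crkS r (Dset r b) < nA r a := by
  classical
  have hmem : Dset r b ∈ DVals r := mem_DVals_of hb
  constructor
  · intro ha
    have hsub : insert (Dset r b) ((DVals r).filter fun w => Dset r b ⊂ w)
        ⊆ (DVals r).filter fun w => a ∈ w := by
      intro v hv
      rcases Finset.mem_insert.1 hv with rfl | hv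
      · exact Finset.mem_filter.2 ⟨hmem, ha⟩
      · have := Finset.mem_filter.1 hv
        exact Finset.mem_filter.2 ⟨this.1, this.2.subset ha⟩
    have hni : Dset r b ∉ (DVals r).filter fun w => Dset r b ⊂ w := by
      intro hx; exact ssubset_irrefl _ (Finset.mem_filter.1 hx).2
    have := Finset.card_le_card hsub
    rw [Finset.card_insert_of_notMem hni] at this
    unfold crkS nA
    omega
  · intro hlt
    by_contra ha
    have hsub : ((DVals r).filter fun w => a ∈ w)
        ⊆ (DVals r).filter fun w => Dset r b ⊂ w := by
      intro v hv
      have ⟨hv1, hv2⟩ := Finset.mem_filter.1 hv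
      refine Finset.mem_filter.2 ⟨hv1, ?_⟩
      rcases DVals_chain Hch hv1 hmem with h | h
      · exact absurd (h hv2) ha
      · refine ⟨h, fun hcon => ha (hcon hv2)⟩
    have := Finset.card_le_card hsub
    unfold crkS nA at hlt
    omega

include Hch in
lemma crkS_strict {v w : Finset (Fin n)} (hv : v ∈ DVals r) (hw : w ∈ DVals r)
    (hvw : v ⊂ w) : crkS r w < crkS r v := by
  apply Finset.card_lt_card
  constructor
  · intro u hu
    have := Finset.mem_filter.1 hu
    exact Finset.mem_filter.2 ⟨this.1, hvw.trans this.2⟩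
  · intro hsub
    have : w ∈ (DVals r).filter fun u => w ⊂ u :=
      hsub (Finset.mem_filter.2 ⟨hw, hvw⟩)
    exact ssubset_irrefl _ (Finset.mem_filter.1 this).2

include Hch in
lemma crkS_injOn {v w : Finset (Fin n)} (hv : v ∈ DVals r) (hw : w ∈ DVals r)
    (h : crkS r v = crkS r w) : v = w := by
  by_contra hne
  rcases DVals_chain Hch hv hw with hs | hs
  · have := crkS_strict Hch hv hw (lt_of_le_of_ne hs hne)
    omega
  · have := crkS_strict Hch hw hv (lt_of_le_of_ne hs (Ne.symm hne))
    omega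

include Hch in
lemma exists_crkS {c : ℕ} (hc : c < kOf r) : ∃ v ∈ DVals r, crkS r v = c := by
  classical
  have himg : (DVals r).image (crkS r) = Finset.range (kOf r) := by
    apply Finset.eq_of_subset_of_card_le
    · intro c' hc'
      obtain ⟨v, hv, rfl⟩ := Finset.mem_image.1 hc'
      exact Finset.mem_range.2 (crkS_lt_k hv)
    · rw [Finset.card_range, Finset.card_image_of_injOn
        (fun v hv w hw h => crkS_injOn Hch hv hw h)]
      rfl
  have : c ∈ (DVals r).image (crkS r) := by rw [himg]; exact Finset.mem_range.2 hc
  obtain ⟨v, hv, hvc⟩ := Finset.mem_image.1 this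
  exact ⟨v, hv, hvc⟩

include Hch in
lemma exists_generic {v : Finset (Fin n)} (hv : v ∈ DVals r) :
    ∃ a ∈ v, ∀ w ∈ DVals r, (a ∈ w ↔ v ⊆ w) := by
  classical
  set B := (DVals r).filter (fun w => w ⊂ v) with hB
  have hnsub : ¬ v ⊆ B.sup id := by
    intro hsub
    rcases B.eq_empty_or_nonempty with hBe | hBne
    · rw [hBe, Finset.sup_empty] at hsub
      exact (DVals_nonempty_mem hv).ne_empty
        (Finset.subset_empty.1 (by simpa using hsub))
    · obtain ⟨w', hw', hmax⟩ := B.exists_maximal hBne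
      have hsup : B.sup id ≤ w' := by
        apply Finset.sup_le
        intro w hw
        rcases DVals_chain Hch (Finset.mem_filter.1 (hB ▸ hw)).1
          (Finset.mem_filter.1 (hB ▸ hw')).1 with h | h
        · exact h
        · rcases lt_or_eq_of_le h with h' | h'
          · exact absurd (hmax hw h) (fun hle => lt_irrefl _ (lt_of_lt_of_le h' hle))
          · exact le_of_eq h'.symm
      have : v ⊆ w' := hsub.trans hsup
      exact (Finset.mem_filter.1 (hB ▸ hw')).2.2 this
  obtain ⟨a, hav, hans⟩ := Finset.not_subset.1 hnsub
  refine ⟨a, hav, fun w hw => ⟨fun haw => ?_, fun hvw => hvw hav⟩⟩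
  rcases DVals_chain Hch hw hv with h | h
  · rcases lt_or_eq_of_le h with h' | h'
    · have hwB : w ∈ B := by rw [hB]; exact Finset.mem_filter.2 ⟨hw, h'⟩
      exact absurd (Finset.le_sup (f := id) hwB haw) hans
    · exact le_of_eq h'.symm
  · exact h

include Hch in
lemma nA_of_generic {v : Finset (Fin n)} (hv : v ∈ DVals r) {a : Fin n}
    (hgen : ∀ w ∈ DVals r, (a ∈ w ↔ v ⊆ w)) : nA r a = crkS r v + 1 := by
  classical
  have h1 : (DVals r).filter (fun w => a ∈ w)
      = insert v ((DVals r).filter fun w => v ⊂ w) := by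
    ext w
    simp only [Finset.mem_filter, Finset.mem_insert]
    constructor
    · rintro ⟨hw1, hw2⟩
      rcases lt_or_eq_of_le ((hgen w hw1).1 hw2) with h' | h'
      · exact Or.inr ⟨hw1, h'⟩
      · exact Or.inl h'.symm
    · rintro (rfl | ⟨hw1, hw2⟩)
      · exact ⟨hv, (hgen w hv).2 le_rfl⟩
      · exact ⟨hw1, (hgen w hw1).2 (le_of_lt hw2)⟩
  have hni : v ∉ (DVals r).filter fun w => v ⊂ w := by
    intro hx; exact ssubset_irrefl _ (Finset.mem_filter.1 hx).2
  unfold nA crkS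
  rw [h1, Finset.card_insert_of_notMem hni]

include Hch in
lemma exists_nA {j : ℕ} (h1 : 1 ≤ j) (h2 : j ≤ kOf r) :
    ∃ a : Fin n, (Uset r a).Nonempty ∧ nA r a = j := by
  obtain ⟨v, hv, hvc⟩ := exists_crkS Hch (show j - 1 < kOf r by omega)
  obtain ⟨a, hav, hgen⟩ := exists_generic Hch hv
  obtain ⟨x, hx, hdx⟩ := mem_DVals.1 hv
  refine ⟨a, ⟨x, mem_Uset.2 (mem_Dset.1 (hdx ▸ hav))⟩, ?_⟩
  rw [nA_of_generic Hch hv hgen, hvc]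
  omega
end Hyp

end Master

section Master2
variable {n : ℕ} {r : Fin n → Fin n → Prop}

lemma PsiL_length : (PsiL r).length = mOf r := by simp [PsiL]

lemma PsiL_getD {p : ℕ} (hp : p < mOf r) : (PsiL r).getD p ∅ = blockAt r p := by
  rw [List.getD_eq_getElem _ _ (by simpa [PsiL] using hp)]
  simp [PsiL]

section Hyp2
variable (Hch : ∀ x y : Fin n, Dset r x ⊆ Dset r y ∨ Dset r y ⊆ Dset r x)
  (H2 : ∀ a b c : Fin n, r a b → r b c → False)

include H2 in
lemma iotaF_lt (x : Fin n) : iotaF r x < mOf r := by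
  by_cases hD : (Dset r x).Nonempty
  · rw [iotaF_of_D hD]
    have := crkS_lt_k (mem_DVals_of hD)
    unfold mOf; omega
  · by_cases hU : (Uset r x).Nonempty
    · rw [iotaF_of_U hD hU]
      have h1 := nA_pos hU
      have h2 := nA_le_k (r := r) x
      unfold mOf; omega
    · rw [iotaF_of_iso hD hU]
      have : x ∈ Zset r := by
        simp only [Zset, Finset.mem_filter, Finset.mem_univ, true_and]
        rw [Finset.not_nonempty_iff_eq_empty] at hD hU
        exact ⟨hD, hU⟩
      have := oOf_eq_one_of ⟨x, this⟩
      unfold mOf; omega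

include Hch H2 in
lemma blockAt_nonempty {p : ℕ} (hp : p < mOf r) : (blockAt r p).Nonempty := by
  by_cases hz : oOf r = 1 ∧ p = 0
  · obtain ⟨z, hzmem⟩ := oOf_eq_one hz.1
    simp only [Zset, Finset.mem_filter, Finset.mem_univ, true_and] at hzmem
    refine ⟨z, mem_blockAt.2 ?_⟩
    rw [iotaF_of_iso (by rw [hzmem.1]; exact Finset.not_nonempty_empty)
      (by rw [hzmem.2]; exact Finset.not_nonempty_empty), hz.2]
  · have ho := oOf_le_one (r := r)
    by_cases hpar : p % 2 = oOf r
    · -- T-block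
      have hc : (p - oOf r) / 2 < kOf r := by unfold mOf at hp; omega
      obtain ⟨v, hv, hvc⟩ := exists_crkS Hch hc
      obtain ⟨x, hx, hdx⟩ := mem_DVals.1 hv
      refine ⟨x, mem_blockAt.2 ?_⟩
      rw [iotaF_of_D hx, hdx, hvc]
      omega
    · -- A-block
      have hp1 : 1 ≤ p := by omega
      have hj1 : 1 ≤ (p + 1 - oOf r) / 2 := by omega
      have hj2 : (p + 1 - oOf r) / 2 ≤ kOf r := by unfold mOf at hp; omega
      obtain ⟨a, hU, hnA⟩ := exists_nA Hch hj1 hj2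
      have hD : ¬ (Dset r a).Nonempty := fun hD => D_U_not_both H2 hD hU
      refine ⟨a, mem_blockAt.2 ?_⟩
      rw [iotaF_of_U hD hU, hnA]
      omega

include Hch H2 in
lemma valid_PsiL : Valid n (PsiL r) := by
  refine ⟨?_, ?_, ?_⟩
  · intro s hs
    obtain ⟨p, hp, rfl⟩ := List.mem_map.1 hs
    exact blockAt_nonempty Hch H2 (List.mem_range.1 hp)
  · rw [List.pairwise_iff_getElem]
    intro i j hi hj hij
    simp only [PsiL, List.getElem_map, List.getElem_range] at *
    rw [Finset.disjoint_left]
    intro x hx1 hx2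
    rw [mem_blockAt] at hx1 hx2
    omega
  · apply Finset.eq_univ_of_forall
    intro x
    rw [mem_foldr_union]
    refine ⟨blockAt r (iotaF r x), ?_, mem_blockAt.2 rfl⟩
    exact List.mem_map.2 ⟨iotaF r x, List.mem_range.2 (iotaF_lt H2 x), rfl⟩

include Hch H2 in
lemma ltL_PsiL_iff (a b : Fin n) : ltL (PsiL r) a b ↔ r a b := by
  have hmod : mOf r % 2 = oOf r := mOf_mod_two
  have ho := oOf_le_one (r := r)
  constructor
  · rintro ⟨p, q, hqp, hp, hppar, hqpar, ha, hb⟩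
    rw [PsiL_length] at hp hppar hqpar
    rw [PsiL_getD hp, mem_blockAt] at ha
    rw [PsiL_getD (hqp.trans hp), mem_blockAt] at hb
    -- analyze b's branch
    by_cases hDb : (Dset r b).Nonempty
    · rw [iotaF_of_D hDb] at hb
      -- analyze a's branch
      by_cases hDa : (Dset r a).Nonempty
      · rw [iotaF_of_D hDa] at ha
        omega
      · by_cases hUa : (Uset r a).Nonempty
        · rw [iotaF_of_U hDa hUa] at ha
          have hna := nA_pos hUa
          have hcb : crkS r (Dset r b) < nA r a := by omega
          exact mem_Dset.1 ((chainCount Hch hDb).2 hcb)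
        · rw [iotaF_of_iso hDa hUa] at ha
          omega
    · by_cases hUb : (Uset r b).Nonempty
      · rw [iotaF_of_U hDb hUb] at hb
        have := nA_pos hUb
        omega
      · rw [iotaF_of_iso hDb hUb] at hb
        have hzb : (Zset r).Nonempty := by
          refine ⟨b, ?_⟩
          simp only [Zset, Finset.mem_filter, Finset.mem_univ, true_and]
          rw [Finset.not_nonempty_iff_eq_empty] at hDb hUb
          exact ⟨hDb, hUb⟩
        have := oOf_eq_one_of hzb
        omega
  · intro hr
    have hab : a ∈ Dset r b := mem_Dset.2 hr
    have hDb : (Dset r b).Nonempty := ⟨a, hab⟩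
    have hUa : (Uset r a).Nonempty := ⟨b, mem_Uset.2 hr⟩
    have hDa : ¬ (Dset r a).Nonempty := fun hD => D_U_not_both H2 hD hUa
    have hcb := (chainCount Hch hDb).1 hab
    have hka := nA_le_k (r := r) a
    have hkb := crkS_lt_k (mem_DVals_of hDb)
    have hna := nA_pos hUa
    refine ⟨oOf r + 2 * nA r a - 1, oOf r + 2 * crkS r (Dset r b), by omega,
      ?_, ?_, ?_, ?_, ?_⟩
    · rw [PsiL_length]; unfold mOf; omega
    · rw [PsiL_length]; omega
    · rw [PsiL_length]; omega
    · rw [PsiL_getD (by unfold mOf; omega), mem_blockAt, iotaF_of_U hDa hUa]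
    · rw [PsiL_getD (by unfold mOf; omega), mem_blockAt, iotaF_of_D hDb]
end Hyp2
end Master2

section Surj
variable {n : ℕ}

lemma semi_H2 {P : PartialOrder (Fin n)} (hP : SemiLenLe n 1 P) :
    ∀ a b c : Fin n, (@LT.lt _ P.toPreorder.toLT a b) →
      (@LT.lt _ P.toPreorder.toLT b c) → False := by
  letI := P
  intro a b c hab hbc
  apply hP.2
  refine ⟨![a, b, c], ?_⟩
  rw [Fin.strictMono_iff_lt_succ]
  intro i
  fin_cases i <;> simpa

lemma semi_Hch {P : PartialOrder (Fin n)} (hP : SemiLenLe n 1 P) :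
    ∀ x y : Fin n,
      Dset (fun a b : Fin n => @LT.lt _ P.toPreorder.toLT a b) x ⊆
        Dset (fun a b : Fin n => @LT.lt _ P.toPreorder.toLT a b) y ∨
      Dset (fun a b : Fin n => @LT.lt _ P.toPreorder.toLT a b) y ⊆
        Dset (fun a b : Fin n => @LT.lt _ P.toPreorder.toLT a b) x := by
  letI := P
  have H2 := semi_H2 hP
  intro x y
  by_contra hcon
  rw [not_or] at hcon
  obtain ⟨a, ha1, ha2⟩ := Finset.not_subset.1 hcon.1
  obtain ⟨b, hb1, hb2⟩ := Finset.not_subset.1 hcon.2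
  rw [mem_Dset] at ha1 hb1
  rw [mem_Dset] at ha2 hb2
  -- ha1 : a < x, ha2 : ¬ a < y, hb1 : b < y, hb2 : ¬ b < x
  apply hP.1.1
  refine ⟨x, a, y, b, ha1, hb1, ?_, ?_, ?_, ?_⟩
  · constructor
    · intro h
      rcases lt_or_eq_of_le h with h' | h'
      · exact H2 a x y ha1 h'
      · exact ha2 (h' ▸ ha1)
    · intro h
      rcases lt_or_eq_of_le h with h' | h'
      · exact H2 b y x hb1 h'
      · exact hb2 (h' ▸ hb1)
  · constructor
    · intro h
      rcases lt_or_eq_of_le h with h' | h'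
      · exact H2 a x b ha1 h'
      · exact H2 a x y ha1 (h' ▸ hb1)
    · intro h
      rcases lt_or_eq_of_le h with h' | h'
      · exact hb2 h'
      · exact H2 a x y ha1 (h'.symm ▸ hb1)
  · constructor
    · intro h
      rcases lt_or_eq_of_le h with h' | h'
      · exact ha2 h'
      · exact H2 b a x (h' ▸ hb1) ha1
    · intro h
      rcases lt_or_eq_of_le h with h' | h'
      · exact H2 y a x h' ha1
      · exact H2 b a x (h'.symm ▸ hb1) ha1
  · constructor
    · intro h
      rcases lt_or_eq_of_le h with h' | h'
      · exact H2 a b y h' hb1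
      · exact hb2 (h' ▸ ha1)
    · intro h
      rcases lt_or_eq_of_le h with h' | h'
      · exact H2 b a x h' ha1
      · exact ha2 (h' ▸ hb1)

lemma phi_surj_aux {P : PartialOrder (Fin n)} (hP : SemiLenLe n 1 P) :
    ∃ (L : List (Finset (Fin n))) (hV : Valid n L), toPO L hV = P := by
  have Hch := semi_Hch hP
  have H2 := semi_H2 hP
  refine ⟨PsiL _, valid_PsiL Hch H2, ?_⟩
  apply PartialOrder.ext
  intro a b
  rw [toPO_le_iff, ltL_PsiL_iff Hch H2]
  constructor
  · rintro (rfl | h)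
    · exact @le_refl _ P.toPreorder a
    · exact @le_of_lt _ P.toPreorder _ _ h
  · intro h
    rcases @lt_or_eq_of_le _ P _ _ h with h' | h'
    · exact Or.inr h'
    · exact Or.inl h'

end Surj

section Recovery
variable {n : ℕ}

/-- arithmetic counting lemma -/
lemma card_par_filter (m t : ℕ) (ht : t ≤ m) :
    ((Finset.range m).filter fun q => q % 2 = m % 2 ∧ q < t).card
      = (t + 1 - m % 2) / 2 := by
  have h : ((Finset.range m).filter fun q => q % 2 = m % 2 ∧ q < t)
      = (Finset.range ((t + 1 - m % 2) / 2)).image (fun i => m % 2 + 2 * i) := by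
    ext q
    simp only [Finset.mem_filter, Finset.mem_range, Finset.mem_image]
    constructor
    · rintro ⟨hq, hpar, hqt⟩
      exact ⟨(q - m % 2) / 2, by omega, by omega⟩
    · rintro ⟨i, hi, rfl⟩
      omega
  rw [h, Finset.card_image_of_injective _ (fun a b hab => by omega), Finset.card_range]

variable {L : List (Finset (Fin n))}

open Classical in
/-- the down-set determined by a block index. -/
noncomputable def Dv (L : List (Finset (Fin n))) (j : ℕ) : Finset (Fin n) :=
  Finset.univ.filter fun a =>
    ∃ p, j < p ∧ p < L.length ∧ p % 2 ≠ L.length % 2 ∧ a ∈ L.getD p ∅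

lemma mem_Dv {j : ℕ} {a : Fin n} :
    a ∈ Dv L j ↔ ∃ p, j < p ∧ p < L.length ∧ p % 2 ≠ L.length % 2 ∧ a ∈ L.getD p ∅ := by
  simp [Dv]

/-- the set of T-indices. -/
def Tind (L : List (Finset (Fin n))) : Finset ℕ :=
  (Finset.range L.length).filter fun q => q % 2 = L.length % 2

lemma mem_Tind {q : ℕ} : q ∈ Tind L ↔ q < L.length ∧ q % 2 = L.length % 2 := by
  simp [Tind]

lemma block_nonempty (hV : Valid n L) {q : ℕ} (hq : q < L.length) :
    (L.getD q ∅).Nonempty := by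
  rw [List.getD_eq_getElem _ _ hq]
  exact hV.1 _ (List.getElem_mem hq)

lemma Dset_ltL_eq_Dv (hV : Valid n L) {x : Fin n} {j : ℕ} (hj : j < L.length)
    (hx : x ∈ L.getD j ∅) (hpar : j % 2 = L.length % 2) :
    Dset (ltL L) x = Dv L j := by
  ext a
  rw [mem_Dset, mem_Dv]
  constructor
  · rintro ⟨p, q, hqp, hp, hppar, hqpar, hap, hxq⟩
    have : q = j := hV.idx_unique (hqp.trans hp) hj hxq hx
    exact ⟨p, this ▸ hqp, hp, hppar, hap⟩
  · rintro ⟨p, hjp, hp, hppar, hap⟩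
    exact ⟨p, j, hjp, hp, hppar, hpar, hap, hx⟩

lemma Dset_ltL_empty (hV : Valid n L) {x : Fin n} {j : ℕ} (hj : j < L.length)
    (hx : x ∈ L.getD j ∅) (hpar : j % 2 ≠ L.length % 2) :
    Dset (ltL L) x = ∅ := by
  rw [Finset.eq_empty_iff_forall_notMem]
  intro a ha
  obtain ⟨p, q, hqp, hp, hppar, hqpar, hap, hxq⟩ := mem_Dset.1 ha
  have : q = j := hV.idx_unique (hqp.trans hp) hj hxq hx
  omega

lemma Dset_ltL_nonempty (hV : Valid n L) {x : Fin n} {j : ℕ} (hj : j < L.length)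
    (hx : x ∈ L.getD j ∅) (hpar : j % 2 = L.length % 2) :
    (Dset (ltL L) x).Nonempty := by
  have hj1 : j + 1 < L.length ∧ (j + 1) % 2 ≠ L.length % 2 := by omega
  obtain ⟨b, hb⟩ := block_nonempty hV hj1.1
  exact ⟨b, mem_Dset.2 ⟨j + 1, j, by omega, hj1.1, hj1.2, hpar, hb, hx⟩⟩

lemma Uset_ltL_nonempty (hV : Valid n L) {x : Fin n} {j : ℕ} (hj : j < L.length)
    (hx : x ∈ L.getD j ∅) (hpar : j % 2 ≠ L.length % 2) (hj0 : j ≠ 0) :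
    (Uset (ltL L) x).Nonempty := by
  have hex : ∃ q, q < j ∧ q % 2 = L.length % 2 := by
    rcases Nat.eq_zero_or_pos (L.length % 2) with h | h
    · exact ⟨0, by omega, by omega⟩
    · exact ⟨1, by omega, by omega⟩
  obtain ⟨q, hqj, hqpar⟩ := hex
  obtain ⟨b, hb⟩ := block_nonempty hV (hqj.trans hj)
  exact ⟨b, mem_Uset.2 ⟨j, q, hqj, hj, hpar, hqpar, hx, hb⟩⟩

lemma Uset_ltL_zero (hV : Valid n L) {x : Fin n} (hm : 0 < L.length)
    (hx : x ∈ L.getD 0 ∅) (hpar : L.length % 2 = 1) :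
    Uset (ltL L) x = ∅ := by
  rw [Finset.eq_empty_iff_forall_notMem]
  intro b hb
  obtain ⟨p, q, hqp, hp, hppar, hqpar, hxp, hbq⟩ := mem_Uset.1 hb
  have : p = 0 := hV.idx_unique hp hm hxp hx
  omega

lemma Zset_ltL_nonempty_iff (hV : Valid n L) :
    (Zset (ltL L)).Nonempty ↔ L.length % 2 = 1 := by
  constructor
  · rintro ⟨z, hz⟩
    simp only [Zset, Finset.mem_filter, Finset.mem_univ, true_and] at hz
    obtain ⟨j, hj, hjx⟩ := hV.exists_idx z
    by_cases hpar : j % 2 = L.length % 2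
    · have := Dset_ltL_nonempty hV hj hjx hpar
      rw [hz.1] at this
      exact absurd this Finset.not_nonempty_empty
    · by_cases hj0 : j = 0
      · omega
      · have := Uset_ltL_nonempty hV hj hjx hpar hj0
        rw [hz.2] at this
        exact absurd this Finset.not_nonempty_empty
  · intro hm
    have h0 : 0 < L.length := by omega
    obtain ⟨z, hz⟩ := block_nonempty hV h0
    refine ⟨z, ?_⟩
    simp only [Zset, Finset.mem_filter, Finset.mem_univ, true_and]
    exact ⟨Dset_ltL_empty hV h0 hz (by omega), Uset_ltL_zero hV h0 hz hm⟩

lemma oOf_ltL (hV : Valid n L) : oOf (ltL L) = L.length % 2 := by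
  unfold oOf
  split
  · exact ((Zset_ltL_nonempty_iff hV).1 (by assumption)).symm
  · rcases Nat.mod_two_eq_zero_or_one L.length with h | h
    · omega
    · exact absurd ((Zset_ltL_nonempty_iff hV).2 h) (by assumption)

lemma Dv_ssubset (hV : Valid n L) {q q' : ℕ} (hq : q ∈ Tind L) (hq' : q' ∈ Tind L)
    (hlt : q < q') : Dv L q' ⊂ Dv L q := by
  rw [mem_Tind] at hq hq'
  constructor
  · intro a ha
    obtain ⟨p, hp1, hp2, hp3, hp4⟩ := mem_Dv.1 ha
    exact mem_Dv.2 ⟨p, by omega, hp2, hp3, hp4⟩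
  · intro hsub
    have hq1 : q + 1 < L.length ∧ (q + 1) % 2 ≠ L.length % 2 := by omega
    obtain ⟨a, ha⟩ := block_nonempty hV hq1.1
    have ha1 : a ∈ Dv L q := mem_Dv.2 ⟨q + 1, by omega, hq1.1, hq1.2, ha⟩
    obtain ⟨p, hp1, hp2, hp3, hp4⟩ := mem_Dv.1 (hsub ha1)
    have : p = q + 1 := hV.idx_unique hp2 hq1.1 hp4 ha
    omega

lemma Dv_injOn (hV : Valid n L) {q q' : ℕ} (hq : q ∈ Tind L) (hq' : q' ∈ Tind L)
    (h : Dv L q = Dv L q') : q = q' := by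
  by_contra hne
  rcases lt_or_gt_of_ne hne with h' | h'
  · exact (Dv_ssubset hV hq hq' h').ne (h.symm)
  · exact (Dv_ssubset hV hq' hq h').ne h

lemma DVals_ltL (hV : Valid n L) : DVals (ltL L) = (Tind L).image (Dv L) := by
  ext v
  rw [mem_DVals, Finset.mem_image]
  constructor
  · rintro ⟨x, hne, rfl⟩
    obtain ⟨j, hj, hjx⟩ := hV.exists_idx x
    by_cases hpar : j % 2 = L.length % 2
    · exact ⟨j, mem_Tind.2 ⟨hj, hpar⟩, (Dset_ltL_eq_Dv hV hj hjx hpar).symm⟩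
    · rw [Dset_ltL_empty hV hj hjx hpar] at hne
      exact absurd hne Finset.not_nonempty_empty
  · rintro ⟨j, hj, rfl⟩
    have hj' := mem_Tind.1 hj
    obtain ⟨x, hx⟩ := block_nonempty hV hj'.1
    exact ⟨x, Dset_ltL_nonempty hV hj'.1 hx hj'.2,
      Dset_ltL_eq_Dv hV hj'.1 hx hj'.2⟩

lemma Tind_card : (Tind L).card = ((L.length + 1 - L.length % 2) / 2) := by
  have : Tind L = (Finset.range L.length).filter
      fun q => q % 2 = L.length % 2 ∧ q < L.length := by
    ext q
    simp only [Tind, Finset.mem_filter, Finset.mem_range]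
    tauto
  rw [this, card_par_filter _ _ le_rfl]

lemma kOf_ltL (hV : Valid n L) : kOf (ltL L) = L.length / 2 := by
  unfold kOf
  rw [DVals_ltL hV, Finset.card_image_of_injOn (fun q hq q' hq' h => Dv_injOn hV hq hq' h),
    Tind_card]
  omega

lemma mOf_ltL (hV : Valid n L) : mOf (ltL L) = L.length := by
  unfold mOf
  rw [oOf_ltL hV, kOf_ltL hV]
  omega

lemma iotaF_ltL (hV : Valid n L) {x : Fin n} {j : ℕ} (hj : j < L.length)
    (hx : x ∈ L.getD j ∅) : iotaF (ltL L) x = j := by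
  classical
  by_cases hpar : j % 2 = L.length % 2
  · -- T-block
    have hD := Dset_ltL_nonempty hV hj hx hpar
    rw [iotaF_of_D hD, oOf_ltL hV]
    have hDv : Dset (ltL L) x = Dv L j := Dset_ltL_eq_Dv hV hj hx hpar
    unfold crkS
    rw [hDv, DVals_ltL hV, Finset.filter_image,
      Finset.card_image_of_injOn (fun q hq q' hq' h =>
        Dv_injOn hV (Finset.mem_filter.1 hq).1 (Finset.mem_filter.1 hq').1 h)]
    have heq : ((Tind L).filter fun q => Dv L j ⊂ Dv L q)
        = (Finset.range L.length).filter fun q => q % 2 = L.length % 2 ∧ q < j := by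
      ext q
      simp only [Finset.mem_filter, mem_Tind, Finset.mem_range]
      constructor
      · rintro ⟨⟨h1, h2⟩, h3⟩
        refine ⟨h1, h2, ?_⟩
        by_contra hle
        rcases Nat.lt_or_ge j q with h' | h'
        · exact (ssubset_asymm h3) (Dv_ssubset hV (mem_Tind.2 ⟨hj, hpar⟩)
            (mem_Tind.2 ⟨h1, h2⟩) h')
        · have : q = j := by omega
          exact (ssubset_irrefl _) (this ▸ h3)
      · rintro ⟨h1, h2, h3⟩
        exact ⟨⟨h1, h2⟩, Dv_ssubset hV (mem_Tind.2 ⟨h1, h2⟩)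
          (mem_Tind.2 ⟨hj, hpar⟩) h3⟩
    rw [heq, card_par_filter _ _ (le_of_lt hj)]
    omega
  · by_cases hj0 : j = 0
    · -- Z-block
      have hm : L.length % 2 = 1 := by omega
      subst hj0
      rw [iotaF_of_iso
        (by rw [Dset_ltL_empty hV hj hx hpar]; exact Finset.not_nonempty_empty)
        (by rw [Uset_ltL_zero hV hj hx hm]; exact Finset.not_nonempty_empty)]
    · -- A-block
      have hD : ¬ (Dset (ltL L) x).Nonempty := by
        rw [Dset_ltL_empty hV hj hx hpar]; exact Finset.not_nonempty_empty
      have hU := Uset_ltL_nonempty hV hj hx hpar hj0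
      rw [iotaF_of_U hD hU, oOf_ltL hV]
      unfold nA
      rw [DVals_ltL hV, Finset.filter_image,
        Finset.card_image_of_injOn (fun q hq q' hq' h =>
          Dv_injOn hV (Finset.mem_filter.1 hq).1 (Finset.mem_filter.1 hq').1 h)]
      have heq : ((Tind L).filter fun q => x ∈ Dv L q)
          = (Finset.range L.length).filter fun q => q % 2 = L.length % 2 ∧ q < j := by
        ext q
        simp only [Finset.mem_filter, mem_Tind, Finset.mem_range]
        constructor
        · rintro ⟨⟨h1, h2⟩, h3⟩
          obtain ⟨p, hp1, hp2, hp3, hp4⟩ := mem_Dv.1 h3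
          have : p = j := hV.idx_unique hp2 hj hp4 hx
          exact ⟨h1, h2, by omega⟩
        · rintro ⟨h1, h2, h3⟩
          exact ⟨⟨h1, h2⟩, mem_Dv.2 ⟨j, h3, hj, hpar, hx⟩⟩
      rw [heq, card_par_filter _ _ (le_of_lt hj)]
      omega

lemma PsiL_ltL (hV : Valid n L) : PsiL (ltL L) = L := by
  apply List.ext_getElem
  · rw [PsiL_length, mOf_ltL hV]
  · intro i h1 h2
    simp only [PsiL, List.getElem_map, List.getElem_range]
    have : blockAt (ltL L) i = L.getD i ∅ := by
      ext x
      rw [mem_blockAt]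
      constructor
      · intro hi
        obtain ⟨j, hj, hjx⟩ := hV.exists_idx x
        have := iotaF_ltL hV hj hjx
        rw [this] at hi
        exact hi ▸ hjx
      · intro hx
        exact iotaF_ltL hV h2 hx
    rw [this, List.getD_eq_getElem _ _ h2]

end Recovery

section Final
variable {n : ℕ}

noncomputable def phiMap (n : ℕ) :
    {L : List (Finset (Fin n)) //
        (∀ s ∈ L, s.Nonempty) ∧ L.Pairwise (fun s t => Disjoint s t) ∧
          L.foldr (· ∪ ·) ∅ = Finset.univ} →
    {P : PartialOrder (Fin n) // SemiLenLe n 1 P} :=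
  fun L => ⟨toPO L.1 L.2, toPO_semi L.2⟩

lemma phiMap_inj : Function.Injective (phiMap n) := by
  rintro ⟨L1, h1⟩ ⟨L2, h2⟩ h
  have hPO : toPO L1 h1 = toPO L2 h2 := congrArg Subtype.val h
  have hiff : ∀ a b : Fin n, (@LE.le _ (toPO L1 h1).toPreorder.toLE a b)
      ↔ (@LE.le _ (toPO L2 h2).toPreorder.toLE a b) := by
    rw [hPO]
    exact fun a b => Iff.rfl
  have hrel : ltL L1 = ltL L2 := by
    funext a b
    apply propext
    constructor
    · intro hl
      have h2' : a = b ∨ ltL L2 a b := (hiff a b).1 (Or.inr hl)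
      rcases h2' with h'' | h''
      · exact absurd h'' (ltL_ne h1 hl)
      · exact h''
    · intro hl
      have h2' : a = b ∨ ltL L1 a b := (hiff a b).2 (Or.inr hl)
      rcases h2' with h'' | h''
      · exact absurd h'' (ltL_ne h2 hl)
      · exact h''
  apply Subtype.ext
  calc L1 = PsiL (ltL L1) := (PsiL_ltL h1).symm
    _ = PsiL (ltL L2) := by rw [hrel]
    _ = L2 := PsiL_ltL h2

lemma phiMap_surj : Function.Surjective (phiMap n) := by
  rintro ⟨P, hP⟩
  obtain ⟨L, hV, hPO⟩ := phi_surj_aux hP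
  exact ⟨⟨L, hV⟩, Subtype.ext hPO⟩

end Final

theorem statement18 (n : ℕ) :
    Nat.card {P : PartialOrder (Fin n) // SemiLenLe n 1 P}
      = Nat.card {L : List (Finset (Fin n)) //
          (∀ s ∈ L, s.Nonempty) ∧ L.Pairwise (fun s t => Disjoint s t) ∧
          L.foldr (· ∪ ·) ∅ = Finset.univ} := by
  exact (Nat.card_eq_of_bijective (phiMap n) ⟨phiMap_inj, phiMap_surj⟩).symm

end Paper
end
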